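/- Let R be a principal ideal domain and let α : R^m → R^n be an R-linear map between finite free R-modules with standard bases (e₁, ..., e_m) and (f₁, ..., f_n). Then there exist R-linear automorphisms φ of R^m and ψ of R^n such that the composite ψ ∘ α ∘ φ is diagonal with respect to the standard bases: for every i and j with i ≠ j, the j-th coordinate of (ψ ∘ α ∘ φ)(e_i) is zero; equivalently, for each i ≤ min(m, n) there exists r_i ∈ R with (ψ ∘ α ∘ φ)(e_i) = r_i · f_i, and (ψ ∘ α ∘ φ)(e_i) = 0 for i > n. -/

import Mathlib

/-- over a principal ideal domain `R`, any linear map `α : R^m → R^n` can be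
diagonalized: there are `R`-linear automorphisms `φ` of `R^m` and `ψ` of `R^n` such that
`ψ ∘ α ∘ φ` sends the `i`-th standard basis vector of `R^m` to a multiple of the `i`-th
standard basis vector of `R^n`, i.e. all of its other coordinates vanish. -/
theorem stmt11 {R : Type*} [CommRing R] [IsDomain R] [IsPrincipalIdealRing R]
    (m n : ℕ) (α : (Fin m → R) →ₗ[R] (Fin n → R)) :
    ∃ (φ : (Fin m → R) ≃ₗ[R] (Fin m → R)) (ψ : (Fin n → R) ≃ₗ[R] (Fin n → R)),
      ∀ (i : Fin m) (j : Fin n), (i : ℕ) ≠ (j : ℕ) →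
        ψ (α (φ (Pi.single i 1))) j = 0 := by
  classical
  set N := LinearMap.range α with hN
  obtain ⟨k, snf⟩ := N.smithNormalForm (Pi.basisFun R (Fin n))
  obtain ⟨bM, bN, f, a, hsnf⟩ := snf
  -- k ≤ n
  have hkn : k ≤ n := by simpa using Fintype.card_le_of_embedding f
  -- section s of α over N
  have hmem : ∀ i : Fin k, ∃ x, α x = (bN i : Fin n → R) := fun i => (bN i).2
  set s : N →ₗ[R] (Fin m → R) := bN.constr R (fun i => (hmem i).choose) with hs
  have hsec : ∀ y : N, α (s y) = (y : Fin n → R) := by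
    intro y
    have : α ∘ₗ s = N.subtype := by
      apply bN.ext
      intro i
      simp [hs, (hmem i).choose_spec]
    simpa using LinearMap.congr_fun this y
  have hsinj : Function.Injective s := by
    intro y z h
    have : (y : Fin n → R) = z := by rw [← hsec y, ← hsec z, h]
    exact Subtype.ext this
  -- range s is a complement of ker α
  have hcompl : IsCompl (LinearMap.range s) (LinearMap.ker α) := by
    constructor
    · rw [disjoint_iff]
      ext x
      simp only [Submodule.mem_inf, LinearMap.mem_range, LinearMap.mem_ker,
        Submodule.mem_bot]
      constructor
      · rintro ⟨⟨y, rfl⟩, hx⟩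
        have : (y : Fin n → R) = 0 := by rw [← hsec y, hx]
        rw [show y = 0 from Subtype.ext this]; simp
      · rintro rfl; exact ⟨⟨0, by simp⟩, by simp⟩
    · rw [codisjoint_iff, eq_top_iff]
      intro x _
      have hx : α x ∈ N := LinearMap.mem_range_self α x
      refine Submodule.mem_sup.2 ⟨s ⟨α x, hx⟩, ⟨_, rfl⟩, x - s ⟨α x, hx⟩, ?_, by ring⟩
      simp [LinearMap.mem_ker, hsec ⟨α x, hx⟩]
  -- basis of the kernel
  obtain ⟨d, bK⟩ := (LinearMap.ker α).basisOfPid (Pi.basisFun R (Fin m))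
  -- basis of range s
  set bQ : Module.Basis (Fin k) R (LinearMap.range s) :=
    bN.map (LinearEquiv.ofInjective s hsinj) with hbQ
  -- basis of R^m
  set c0 : Module.Basis (Fin k ⊕ Fin d) R (Fin m → R) :=
    (bQ.prod bK).map (Submodule.prodEquivOfIsCompl _ _ hcompl) with hc0
  have hcard : k + d = m := by
    have h1 := Module.finrank_eq_card_basis c0
    have h2 := Module.finrank_eq_card_basis (Pi.basisFun R (Fin m))
    simp at h1 h2
    omega
  set e : (Fin k ⊕ Fin d) ≃ Fin m := finSumFinEquiv.trans (finCongr hcard) with he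
  set c : Module.Basis (Fin m) R (Fin m → R) := c0.reindex e with hc
  -- the permutation of Fin n
  set e1 : Fin k ≃ Set.range f := Equiv.ofInjective f f.injective with he1
  set e2 : Fin k ≃ Set.range (Fin.castLE hkn) :=
    Equiv.ofInjective _ (Fin.castLE_injective hkn) with he2
  set σ : Equiv.Perm (Fin n) :=
    Equiv.extendSubtype (e1.symm.trans e2) with hσ
  have hσf : ∀ i : Fin k, σ (f i) = Fin.castLE hkn i := by
    intro i
    have hmem' : f i ∈ Set.range f := ⟨i, rfl⟩
    rw [hσ, Equiv.extendSubtype_apply_of_mem _ _ hmem']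
    simp [he1, he2, Equiv.ofInjective_symm_apply]
  -- the automorphisms
  refine ⟨(Pi.basisFun R (Fin m)).equiv c (Equiv.refl _),
    bM.equiv (Pi.basisFun R (Fin n)) σ, ?_⟩
  intro i j hij
  have hφ : (Pi.basisFun R (Fin m)).equiv c (Equiv.refl _) (Pi.single i 1) = c i := by
    have := Module.Basis.equiv_apply (b := Pi.basisFun R (Fin m)) (b' := c) i (Equiv.refl _)
    simpa using this
  rw [hφ]
  rcases hsplit : e.symm i with i₀ | i₁
  · -- i corresponds to the range part
    have hci : c i = s (bN i₀) := by
      rw [hc, Module.Basis.reindex_apply, hsplit]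
      simp [hc0, hbQ, Submodule.coe_prodEquivOfIsCompl]
    have hival : (i : ℕ) = (i₀ : ℕ) := by
      have : i = e (Sum.inl i₀) := by rw [← hsplit]; simp
      rw [this]; simp [he]
    rw [hci, hsec (bN i₀), hsnf i₀]
    have : (bM.equiv (Pi.basisFun R (Fin n)) σ) (bM (f i₀)) = Pi.single (σ (f i₀)) 1 := by
      rw [Module.Basis.equiv_apply]; simp
    rw [map_smul, this, hσf i₀]
    have hne : (Fin.castLE hkn i₀ : Fin n) ≠ j := by
      intro h
      apply hij
      rw [hival, ← h]; rfl
    simp [Pi.single_apply, hne]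
  · -- i corresponds to the kernel part
    have hci : c i = (bK i₁ : Fin m → R) := by
      rw [hc, Module.Basis.reindex_apply, hsplit]
      simp [hc0, Submodule.coe_prodEquivOfIsCompl]
    rw [hci]
    have : α (bK i₁ : Fin m → R) = 0 := (bK i₁).2
    rw [this, map_zero]
    rfl
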